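/- arXiv:2102.12336 — 3 statements merged into one kernel-verified Lean document; each statement's English description precedes it below -/
import Mathlib

section
/- In the normalized Hochschild complex of A = k[x,x⁻¹], Connes's boundary B satisfies B(αₙ) = 2n(1⊗αₙ) for αₙ defined by 2αₙ = (x⁻¹⊗x)^{⊗n} − (x⊗x⁻¹)^{⊗n}. -/
/-!
We model the Hochschild chains of the Laurent polynomial algebra `A = k[x,x⁻¹]`
(the group algebra of `ℤ`) through the canonical identification
`A^{⊗(m)} ≅ k[ℤ^m]`: `Ch k m := (Fin m → ℤ) →₀ k`, the basis vector attached to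
`v : Fin m → ℤ` corresponding to the elementary tensor `x^{v 0} ⊗ ⋯ ⊗ x^{v (m-1)}`.
The normalized Hochschild complex is the quotient by the span of elementary tensors
having a `1` (i.e. exponent `0`) in an interior slot; equalities in the normalized
complex are phrased as membership of the difference in that span (`Degenerate`).
-/

/-- Chains with `m` tensor slots: `A^{⊗ m} ≅ k[ℤ^m]`. -/
abbrev Ch (k : Type*) [Field k] (m : ℕ) := (Fin m → ℤ) →₀ k

namespace HochLaurent

variable (k : Type*) [Field k] [CharZero k]

/-- The `i`-th face: multiply the `i`-th and `(i+1)`-st tensor factors. -/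
def mergeFun {m : ℕ} (i : Fin m) (v : Fin (m + 1) → ℤ) : Fin m → ℤ :=
  fun j => if j < i then v j.castSucc
    else if j = i then v j.castSucc + v j.succ else v j.succ

/-- The last face: multiply the last tensor factor into the first one. -/
def wrapFun {m : ℕ} (v : Fin (m + 1) → ℤ) : Fin m → ℤ :=
  fun j => if (j : ℕ) = 0 then v (Fin.last m) + v j.castSucc else v j.castSucc

/-- The Hochschild differential `b` on chains with `m+1` slots (degree `m`). -/
noncomputable def hb (m : ℕ) : Ch k (m + 1) →ₗ[k] Ch k m :=
  (∑ i : Fin m, ((-1 : k) ^ (i : ℕ)) • Finsupp.lmapDomain k k (mergeFun i))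
    + ((-1 : k) ^ m) • Finsupp.lmapDomain k k (wrapFun (m := m))

/-- `1 ⊗ (-)` : tensoring with `1 = x^0` on the left. -/
noncomputable def oneTensor (m : ℕ) : Ch k m →ₗ[k] Ch k (m + 1) :=
  Finsupp.lmapDomain k k (fun v => Fin.cons 0 v)

/-- The span of elementary tensors with a `1` in an interior slot; the normalized
complex is the quotient by this submodule. -/
noncomputable def Degenerate (m : ℕ) : Submodule k (Ch k m) :=
  Submodule.span k
    {c | ∃ (v : Fin m → ℤ) (j : Fin m), (j : ℕ) ≠ 0 ∧ v j = 0 ∧ c = Finsupp.single v 1}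

/-- The element `αₙ` (with `2m` slots, `m = n`), defined by
`2 αₙ = (x⁻¹ ⊗ x)^{⊗ n} - (x ⊗ x⁻¹)^{⊗ n}`. -/
noncomputable def alphaOf (m : ℕ) : Ch k m :=
  (2 : k)⁻¹ •
    (Finsupp.single (fun j : Fin m => if Even (j : ℕ) then -1 else 1) (1 : k)
      - Finsupp.single (fun j : Fin m => if Even (j : ℕ) then 1 else -1) (1 : k))


/-- Connes's boundary `B` on the normalized complex:
`B(x₀ ⊗ ⋯ ⊗ xₘ) = Σᵢ (-1)^{m i} 1 ⊗ xᵢ ⊗ ⋯ ⊗ xₘ ⊗ x₀ ⊗ ⋯ ⊗ x_{i-1}`. -/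
noncomputable def connesB (m : ℕ) : Ch k (m + 1) →ₗ[k] Ch k (m + 2) :=
  ∑ i : Fin (m + 1), ((-1 : k) ^ (m * (i : ℕ))) • Finsupp.lmapDomain k k
    (fun v : Fin (m + 1) → ℤ => Fin.cons 0 (fun t : Fin (m + 1) => v (t + i)))

end HochLaurent

open HochLaurent

lemma sum_alt {M : Type*} [AddCommMonoid M] (A C : M) (m : ℕ) :
    ∑ i ∈ Finset.range (2 * m), (if Even i then A else C) = m • A + m • C := by
  induction m with
  | zero => simp
  | succ p ih =>
    rw [show 2 * (p+1) = 2*p + 1 + 1 by ring, Finset.sum_range_succ, Finset.sum_range_succ, ih]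
    have h1 : Even (2*p) := ⟨p, by ring⟩
    have h2 : ¬ Even (2*p+1) := by simp [Nat.even_add_one, h1]
    simp only [if_pos h1, if_neg h2, succ_nsmul]
    abel

lemma connesB_single (k : Type*) [Field k] [CharZero k] (m : ℕ) (v : Fin (m+1) → ℤ) :
    connesB k m (Finsupp.single v 1) =
      ∑ i : Fin (m+1), (-1:k)^(m * (i:ℕ)) •
        Finsupp.single (Fin.cons 0 (fun t => v (t + i)) : Fin (m+2) → ℤ) 1 := by
  simp [connesB, Finsupp.mapDomain_single]



/- In the normalized Hochschild complex of `k[x,x⁻¹]`, Connes's boundary satisfies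
`B(α_{n+1}) = 2(n+1) (1 ⊗ α_{n+1})`, where `α_{n+1} = alphaOf k (2n+2)`; the equality
holds in the normalized complex, i.e. up to degenerate chains. -/
theorem stmt8 (k : Type*) [Field k] [CharZero k] (n : ℕ) :
    connesB k (2 * n + 1) (alphaOf k (2 * n + 2))
      - (2 * n + 2) • oneTensor k (2 * n + 2) (alphaOf k (2 * n + 2))
      ∈ Degenerate k (2 * n + 3) := by
  suffices h : connesB k (2 * n + 1) (alphaOf k (2 * n + 2))
      - (2 * n + 2) • oneTensor k (2 * n + 2) (alphaOf k (2 * n + 2)) = 0 by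
    rw [h]; exact (Degenerate k (2 * n + 3)).zero_mem
  simp only [alphaOf]
  set a : Fin (2*n+2) → ℤ := fun j => if Even (j:ℕ) then -1 else 1 with ha
  set b : Fin (2*n+2) → ℤ := fun j => if Even (j:ℕ) then 1 else -1 with hb
  set A : Ch k (2*n+3) := Finsupp.single (Fin.cons 0 a) 1 with hA
  set B : Ch k (2*n+3) := Finsupp.single (Fin.cons 0 b) 1 with hB
  have hpar : ∀ i t : Fin (2*n+2), (Even ((t + i : Fin (2*n+2)) : ℕ) ↔ (Even (t:ℕ) ↔ Even (i:ℕ))) := by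
    intro i t
    have hval : ((t + i : Fin (2*n+2)) : ℕ) = ((t:ℕ) + (i:ℕ)) % (2*n+2) := rfl
    rw [hval, Nat.even_iff, Nat.mod_mod_of_dvd _ (⟨n+1, by ring⟩ : 2 ∣ 2*n+2),
      ← Nat.even_iff, Nat.even_add]
  have rota : ∀ i : Fin (2*n+2), (fun t => a (t + i)) = if Even (i:ℕ) then a else b := by
    intro i; funext t
    by_cases hi : Even (i:ℕ) <;> by_cases ht : Even (t:ℕ) <;>
      simp [ha, hb, hpar i t, hi, ht]
  have rotb : ∀ i : Fin (2*n+2), (fun t => b (t + i)) = if Even (i:ℕ) then b else a := by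
    intro i; funext t
    by_cases hi : Even (i:ℕ) <;> by_cases ht : Even (t:ℕ) <;>
      simp [ha, hb, hpar i t, hi, ht]
  have hsgn : ∀ i : ℕ, ((-1:k))^((2*n+1) * i) = (-1)^i := by
    intro i
    have hodd : Odd (2*n+1) := ⟨n, rfl⟩
    rw [pow_mul, hodd.neg_one_pow]
  have hSa : connesB k (2*n+1) (Finsupp.single a 1) = (n+1) • A + (n+1) • (-B) := by
    rw [connesB_single]
    have : ∀ i : Fin (2*n+2), (-1:k)^((2*n+1) * (i:ℕ)) •
        Finsupp.single (Fin.cons 0 (fun t => a (t + i)) : Fin (2*n+3) → ℤ) 1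
        = if Even (i:ℕ) then A else -B := by
      intro i
      rw [rota i, hsgn]
      by_cases hi : Even (i:ℕ)
      · rw [if_pos hi, if_pos hi, hi.neg_one_pow, one_smul, hA]
      · rw [if_neg hi, if_neg hi, (Nat.not_even_iff_odd.1 hi).neg_one_pow, neg_one_smul, hB]
    rw [Finset.sum_congr rfl (fun i _ => this i)]
    rw [Fin.sum_univ_eq_sum_range (fun i => if Even i then A else -B) (2*n+2),
      show 2*n+2 = 2*(n+1) by ring, sum_alt]
  have hSb : connesB k (2*n+1) (Finsupp.single b 1) = (n+1) • B + (n+1) • (-A) := by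
    rw [connesB_single]
    have : ∀ i : Fin (2*n+2), (-1:k)^((2*n+1) * (i:ℕ)) •
        Finsupp.single (Fin.cons 0 (fun t => b (t + i)) : Fin (2*n+3) → ℤ) 1
        = if Even (i:ℕ) then B else -A := by
      intro i
      rw [rotb i, hsgn]
      by_cases hi : Even (i:ℕ)
      · rw [if_pos hi, if_pos hi, hi.neg_one_pow, one_smul, hB]
      · rw [if_neg hi, if_neg hi, (Nat.not_even_iff_odd.1 hi).neg_one_pow, neg_one_smul, hA]
    rw [Finset.sum_congr rfl (fun i _ => this i)]
    rw [Fin.sum_univ_eq_sum_range (fun i => if Even i then B else -A) (2*n+2),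
      show 2*n+2 = 2*(n+1) by ring, sum_alt]
  have hOa : oneTensor k (2*n+2) (Finsupp.single a 1) = A := by
    simp [oneTensor, Finsupp.mapDomain_single, hA]
  have hOb : oneTensor k (2*n+2) (Finsupp.single b 1) = B := by
    simp [oneTensor, Finsupp.mapDomain_single, hB]
  rw [map_smul, map_sub, map_smul, map_sub, hSa, hSb, hOa, hOb, smul_comm (2*n+2)]
  have hz : ((n+1) • A + (n+1) • (-B)) - ((n+1) • B + (n+1) • (-A)) - (2*n+2) • (A - B)
      = (0 : Ch k (2*n+3)) := by module
  rw [← smul_sub, hz, smul_zero]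
end

section
/- The element α = Σ_{k≥0} k! u^k α_{k+1}, where 2αₙ = (x⁻¹⊗x)^{⊗n} − (x⊗x⁻¹)^{⊗n}, is a cycle for the negative cyclic differential b − uB on the normalized Hochschild complex of k[x,x⁻¹] with formal variable u of cohomological degree 2: (b−uB)(α) = 0. -/
open HochLaurent

namespace HL

open HochLaurent Finsupp

variable {k : Type*} [Field k] [CharZero k]

/-- alternating pattern starting with -1 -/
def P (m : ℕ) : Fin m → ℤ := fun j => if Even (j : ℕ) then -1 else 1
def Q (m : ℕ) : Fin m → ℤ := fun j => if Even (j : ℕ) then 1 else -1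
def U (m : ℕ) : Fin m → ℤ := fun j => if (j:ℕ) = 0 then 0 else if Even (j:ℕ) then 1 else -1
def V (m : ℕ) : Fin m → ℤ := fun j => if (j:ℕ) = 0 then 0 else if Even (j:ℕ) then -1 else 1

lemma deg_single (m : ℕ) (v : Fin m → ℤ) (j : Fin m) (hj : (j:ℕ) ≠ 0) (hv : v j = 0)
    (c : k) : Finsupp.single v c ∈ Degenerate k m := by
  have h1 : Finsupp.single v (1:k) ∈ Degenerate k m :=
    Submodule.subset_span ⟨v, j, hj, hv, rfl⟩
  have : Finsupp.single v c = c • Finsupp.single v (1:k) := by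
    rw [Finsupp.smul_single, smul_eq_mul, mul_one]
  rw [this]
  exact Submodule.smul_mem _ _ h1

lemma hb_single (m : ℕ) (v : Fin (m+1) → ℤ) :
    hb k m (Finsupp.single v (1:k))
      = (∑ i : Fin m, ((-1:k)^(i:ℕ)) • Finsupp.single (mergeFun i v) 1)
        + ((-1:k)^m) • Finsupp.single (wrapFun v) 1 := by
  simp [hb, LinearMap.sum_apply, Finsupp.lmapDomain_apply, Finsupp.mapDomain_single]

lemma connesB_single (m : ℕ) (v : Fin (m+1) → ℤ) :
    connesB k m (Finsupp.single v (1:k))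
      = ∑ i : Fin (m+1), ((-1:k)^(m*(i:ℕ))) •
          Finsupp.single (Fin.cons 0 (fun t : Fin (m+1) => v (t+i))) 1 := by
  simp [connesB, LinearMap.sum_apply, Finsupp.lmapDomain_apply, Finsupp.mapDomain_single]


open HochLaurent
set_option linter.unusedSectionVars false

lemma merge0P (m : ℕ) : mergeFun (0 : Fin (m+1)) (P (m+2)) = U (m+1) := by
  funext j
  simp only [mergeFun, P, U]
  rcases Nat.eq_zero_or_pos (j:ℕ) with h | h
  · have hj : j = 0 := Fin.ext h
    subst hj
    simp [Fin.succ]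
  · have h1 : ¬ j < 0 := by simp [Fin.lt_def, Fin.not_lt.mpr]
    have h2 : j ≠ 0 := by
      intro e; rw [e] at h; simp at h
    have h3 : ((j.succ : Fin (m+2)) : ℕ) = (j:ℕ)+1 := rfl
    rw [if_neg h1, if_neg h2, if_neg (by omega : ¬ (j:ℕ) = 0)]
    rw [h3]
    by_cases he : Even (j:ℕ) <;> simp [Nat.even_add_one, he]

lemma merge0Q (m : ℕ) : mergeFun (0 : Fin (m+1)) (Q (m+2)) = V (m+1) := by
  funext j
  simp only [mergeFun, Q, V]
  rcases Nat.eq_zero_or_pos (j:ℕ) with h | h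
  · have hj : j = 0 := Fin.ext h
    subst hj
    simp [Fin.succ]
  · have h1 : ¬ j < 0 := by simp [Fin.lt_def, Fin.not_lt.mpr]
    have h2 : j ≠ 0 := by intro e; rw [e] at h; simp at h
    have h3 : ((j.succ : Fin (m+2)) : ℕ) = (j:ℕ)+1 := rfl
    rw [if_neg h1, if_neg h2, if_neg (by omega : ¬ (j:ℕ) = 0)]
    rw [h3]
    by_cases he : Even (j:ℕ) <;> simp [Nat.even_add_one, he]

lemma wrapP (m : ℕ) (hm : ¬ Even m) : wrapFun (P (m+1)) = V m := by
  funext j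
  simp only [wrapFun, P, V, Fin.val_last, Fin.coe_castSucc]
  by_cases h : (j:ℕ) = 0
  · simp [h, hm]
  · simp [h]

lemma wrapQ (m : ℕ) (hm : ¬ Even m) : wrapFun (Q (m+1)) = U m := by
  funext j
  simp only [wrapFun, Q, U, Fin.val_last, Fin.coe_castSucc]
  by_cases h : (j:ℕ) = 0
  · simp [h, hm]
  · simp [h]

lemma mergeP_zero (m : ℕ) (i : Fin m) : mergeFun i (P (m+1)) i = 0 := by
  simp only [mergeFun, P, lt_irrefl, if_false, if_pos rfl, Fin.coe_castSucc, Fin.val_succ]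
  by_cases he : Even (i:ℕ) <;> simp [Nat.even_add_one, he]

lemma mergeQ_zero (m : ℕ) (i : Fin m) : mergeFun i (Q (m+1)) i = 0 := by
  simp only [mergeFun, Q, lt_irrefl, if_false, if_pos rfl, Fin.coe_castSucc, Fin.val_succ]
  by_cases he : Even (i:ℕ) <;> simp [Nat.even_add_one, he]

lemma consP (m : ℕ) : (Fin.cons 0 (P m) : Fin (m+1) → ℤ) = U (m+1) := by
  funext j
  refine Fin.cases ?_ (fun t => ?_) j
  · simp [U]
  · simp only [Fin.cons_succ, P, U, Fin.val_succ]
    rw [if_neg (by omega : ¬ (t:ℕ)+1 = 0)]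
    by_cases he : Even (t:ℕ) <;> simp [Nat.even_add_one, he]

lemma consQ (m : ℕ) : (Fin.cons 0 (Q m) : Fin (m+1) → ℤ) = V (m+1) := by
  funext j
  refine Fin.cases ?_ (fun t => ?_) j
  · simp [V]
  · simp only [Fin.cons_succ, Q, V, Fin.val_succ]
    rw [if_neg (by omega : ¬ (t:ℕ)+1 = 0)]
    by_cases he : Even (t:ℕ) <;> simp [Nat.even_add_one, he]

lemma even_val_add (n : ℕ) (t i : Fin (2*n+2)) :
    (Even ((t + i : Fin (2*n+2)) : ℕ)) ↔ (Even ((t:ℕ) + (i:ℕ))) := by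
  have : ((t + i : Fin (2*n+2)) : ℕ) = ((t:ℕ) + (i:ℕ)) % (2*n+2) := by
    simp [Fin.add_def]
  rw [this, Nat.even_iff, Nat.even_iff, Nat.mod_mod_of_dvd _ ⟨n+1, by ring⟩]

lemma shiftP (n : ℕ) (i : Fin (2*n+2)) :
    (fun t : Fin (2*n+2) => P (2*n+2) (t + i))
      = if Even (i:ℕ) then P (2*n+2) else Q (2*n+2) := by
  funext t
  have he := even_val_add n t i
  by_cases hi : Even (i:ℕ) <;> by_cases ht : Even (t:ℕ) <;>
    simp [P, Q, he, Nat.even_add, hi, ht]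

lemma shiftQ (n : ℕ) (i : Fin (2*n+2)) :
    (fun t : Fin (2*n+2) => Q (2*n+2) (t + i))
      = if Even (i:ℕ) then Q (2*n+2) else P (2*n+2) := by
  funext t
  have he := even_val_add n t i
  by_cases hi : Even (i:ℕ) <;> by_cases ht : Even (t:ℕ) <;>
    simp [P, Q, he, Nat.even_add, hi, ht]

lemma sum_alt {M : Type*} [AddCommMonoid M] (a b : M) :
    ∀ m : ℕ, ∑ i ∈ Finset.range (2*m), (if Even i then a else b) = m • a + m • b := by
  intro m
  induction m with
  | zero => simp
  | succ p ih =>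
    have : 2*(p+1) = (2*p) + 1 + 1 := by ring
    rw [this, Finset.sum_range_succ, Finset.sum_range_succ, ih]
    have h1 : Even (2*p) := ⟨p, by ring⟩
    have h2 : ¬ Even (2*p+1) := by simp [Nat.even_add_one, h1]
    rw [if_pos h1, if_neg h2, succ_nsmul, succ_nsmul]
    abel


lemma hbP_mem (n : ℕ) :
    hb k (2*n+3) (Finsupp.single (P (2*n+4)) (1:k))
      - (Finsupp.single (U (2*n+3)) 1 - Finsupp.single (V (2*n+3)) 1)
      ∈ Degenerate k (2*n+3) := by
  have e := hb_single (k := k) (2*n+3) (P (2*n+4))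
  have h0 : mergeFun (0 : Fin (2*n+3)) (P (2*n+4)) = U (2*n+3) := merge0P (2*n+2)
  have hw : wrapFun (P (2*n+4)) = V (2*n+3) := wrapP (2*n+3) (by rintro ⟨r, hr⟩; omega)
  have hodd : ((-1:k)^(2*n+3)) = -1 := Odd.neg_one_pow ⟨n+1, by ring⟩
  have key : hb k (2*n+3) (Finsupp.single (P (2*n+4)) (1:k))
      - (Finsupp.single (U (2*n+3)) 1 - Finsupp.single (V (2*n+3)) 1)
      = ∑ i : Fin (2*n+2),
          ((-1:k)^((i.succ : Fin (2*n+3)) : ℕ))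
            • Finsupp.single (mergeFun (i.succ : Fin (2*n+3)) (P (2*n+4))) 1 := by
    rw [e, Fin.sum_univ_succ, h0, hw, hodd]
    simp only [Fin.val_zero, pow_zero, one_smul, neg_one_smul]
    abel
  rw [key]
  refine Submodule.sum_mem _ (fun i _ => Submodule.smul_mem _ _ ?_)
  exact deg_single _ _ (i.succ : Fin (2*n+3)) (by simp) (mergeP_zero (2*n+3) _) 1

lemma hbQ_mem (n : ℕ) :
    hb k (2*n+3) (Finsupp.single (Q (2*n+4)) (1:k))
      + (Finsupp.single (U (2*n+3)) 1 - Finsupp.single (V (2*n+3)) 1)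
      ∈ Degenerate k (2*n+3) := by
  have e := hb_single (k := k) (2*n+3) (Q (2*n+4))
  have h0 : mergeFun (0 : Fin (2*n+3)) (Q (2*n+4)) = V (2*n+3) := merge0Q (2*n+2)
  have hw : wrapFun (Q (2*n+4)) = U (2*n+3) := wrapQ (2*n+3) (by rintro ⟨r, hr⟩; omega)
  have hodd : ((-1:k)^(2*n+3)) = -1 := Odd.neg_one_pow ⟨n+1, by ring⟩
  have key : hb k (2*n+3) (Finsupp.single (Q (2*n+4)) (1:k))
      + (Finsupp.single (U (2*n+3)) 1 - Finsupp.single (V (2*n+3)) 1)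
      = ∑ i : Fin (2*n+2),
          ((-1:k)^((i.succ : Fin (2*n+3)) : ℕ))
            • Finsupp.single (mergeFun (i.succ : Fin (2*n+3)) (Q (2*n+4))) 1 := by
    rw [e, Fin.sum_univ_succ, h0, hw, hodd]
    simp only [Fin.val_zero, pow_zero, one_smul, neg_one_smul]
    abel
  rw [key]
  refine Submodule.sum_mem _ (fun i _ => Submodule.smul_mem _ _ ?_)
  exact deg_single _ _ (i.succ : Fin (2*n+3)) (by simp) (mergeQ_zero (2*n+3) _) 1

lemma hb_alpha_mem (n : ℕ) :
    hb k (2*n+3) (alphaOf k (2*n+4))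
      - (Finsupp.single (U (2*n+3)) 1 - Finsupp.single (V (2*n+3)) 1)
      ∈ Degenerate k (2*n+3) := by
  have hα : alphaOf k (2*n+4)
      = (2:k)⁻¹ • (Finsupp.single (P (2*n+4)) 1 - Finsupp.single (Q (2*n+4)) 1) := rfl
  have hP := hbP_mem (k := k) n
  have hQ := hbQ_mem (k := k) n
  have hid : hb k (2*n+3) (alphaOf k (2*n+4))
      - (Finsupp.single (U (2*n+3)) 1 - Finsupp.single (V (2*n+3)) 1)
      = (2:k)⁻¹ •
        ((hb k (2*n+3) (Finsupp.single (P (2*n+4)) (1:k))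
          - (Finsupp.single (U (2*n+3)) 1 - Finsupp.single (V (2*n+3)) 1))
        - (hb k (2*n+3) (Finsupp.single (Q (2*n+4)) (1:k))
          + (Finsupp.single (U (2*n+3)) 1 - Finsupp.single (V (2*n+3)) 1))) := by
    rw [hα, map_smul, map_sub]
    match_scalars <;> ring
  rw [hid]
  exact Submodule.smul_mem _ _ (Submodule.sub_mem _ hP hQ)
lemma BP (n : ℕ) :
    connesB k (2*n+1) (Finsupp.single (P (2*n+2)) (1:k))
      = (n+1) • Finsupp.single (U (2*n+3)) (1:k)
        + (n+1) • (- Finsupp.single (V (2*n+3)) (1:k)) := by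
  have e := connesB_single (k := k) (2*n+1) (P (2*n+2))
  have term : ∀ i : Fin (2*n+2),
      ((-1:k)^((2*n+1)*(i:ℕ))) •
        Finsupp.single (Fin.cons 0 (fun t : Fin (2*n+2) => P (2*n+2) (t+i))) (1:k)
      = if Even (i:ℕ) then Finsupp.single (U (2*n+3)) (1:k)
          else - Finsupp.single (V (2*n+3)) (1:k) := by
    intro i
    rw [shiftP n i]
    by_cases hi : Even (i:ℕ)
    · rw [if_pos hi, if_pos hi]
      have hc : (Fin.cons 0 (P (2*n+2)) : Fin (2*n+3) → ℤ) = U (2*n+3) := consP (2*n+2)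
      rw [hc]
      have hs : ((-1:k)^((2*n+1)*(i:ℕ))) = 1 := Even.neg_one_pow (hi.mul_left _)
      rw [hs, one_smul]
    · rw [if_neg hi, if_neg hi]
      have hc : (Fin.cons 0 (Q (2*n+2)) : Fin (2*n+3) → ℤ) = V (2*n+3) := consQ (2*n+2)
      rw [hc]
      have hs : ((-1:k)^((2*n+1)*(i:ℕ))) = -1 :=
        Odd.neg_one_pow (Odd.mul ⟨n, by ring⟩ (Nat.odd_iff.mpr (Nat.not_even_iff.mp hi)))
      rw [hs, neg_one_smul]
  rw [e]
  calc (∑ i : Fin (2*n+2), ((-1:k)^((2*n+1)*(i:ℕ))) •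
        Finsupp.single (Fin.cons 0 (fun t : Fin (2*n+2) => P (2*n+2) (t+i))) (1:k))
      = ∑ i : Fin (2*n+2), (if Even (i:ℕ) then Finsupp.single (U (2*n+3)) (1:k)
          else - Finsupp.single (V (2*n+3)) (1:k)) := by
        exact Finset.sum_congr rfl (fun i _ => term i)
    _ = ∑ i ∈ Finset.range (2*n+2), (if Even i then Finsupp.single (U (2*n+3)) (1:k)
          else - Finsupp.single (V (2*n+3)) (1:k)) := by
        exact Fin.sum_univ_eq_sum_range
          (fun i => if Even i then Finsupp.single (U (2*n+3)) (1:k)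
            else - Finsupp.single (V (2*n+3)) (1:k)) (2*n+2)
    _ = (n+1) • Finsupp.single (U (2*n+3)) (1:k)
        + (n+1) • (- Finsupp.single (V (2*n+3)) (1:k)) := by
        have h2 : 2*n+2 = 2*(n+1) := by ring
        rw [h2]
        exact sum_alt _ _ (n+1)

lemma BQ (n : ℕ) :
    connesB k (2*n+1) (Finsupp.single (Q (2*n+2)) (1:k))
      = (n+1) • Finsupp.single (V (2*n+3)) (1:k)
        + (n+1) • (- Finsupp.single (U (2*n+3)) (1:k)) := by
  have e := connesB_single (k := k) (2*n+1) (Q (2*n+2))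
  have term : ∀ i : Fin (2*n+2),
      ((-1:k)^((2*n+1)*(i:ℕ))) •
        Finsupp.single (Fin.cons 0 (fun t : Fin (2*n+2) => Q (2*n+2) (t+i))) (1:k)
      = if Even (i:ℕ) then Finsupp.single (V (2*n+3)) (1:k)
          else - Finsupp.single (U (2*n+3)) (1:k) := by
    intro i
    rw [shiftQ n i]
    by_cases hi : Even (i:ℕ)
    · rw [if_pos hi, if_pos hi]
      have hc : (Fin.cons 0 (Q (2*n+2)) : Fin (2*n+3) → ℤ) = V (2*n+3) := consQ (2*n+2)
      rw [hc]
      have hs : ((-1:k)^((2*n+1)*(i:ℕ))) = 1 := Even.neg_one_pow (hi.mul_left _)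
      rw [hs, one_smul]
    · rw [if_neg hi, if_neg hi]
      have hc : (Fin.cons 0 (P (2*n+2)) : Fin (2*n+3) → ℤ) = U (2*n+3) := consP (2*n+2)
      rw [hc]
      have hs : ((-1:k)^((2*n+1)*(i:ℕ))) = -1 :=
        Odd.neg_one_pow (Odd.mul ⟨n, by ring⟩ (Nat.odd_iff.mpr (Nat.not_even_iff.mp hi)))
      rw [hs, neg_one_smul]
  rw [e]
  calc (∑ i : Fin (2*n+2), ((-1:k)^((2*n+1)*(i:ℕ))) •
        Finsupp.single (Fin.cons 0 (fun t : Fin (2*n+2) => Q (2*n+2) (t+i))) (1:k))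
      = ∑ i : Fin (2*n+2), (if Even (i:ℕ) then Finsupp.single (V (2*n+3)) (1:k)
          else - Finsupp.single (U (2*n+3)) (1:k)) := by
        exact Finset.sum_congr rfl (fun i _ => term i)
    _ = ∑ i ∈ Finset.range (2*n+2), (if Even i then Finsupp.single (V (2*n+3)) (1:k)
          else - Finsupp.single (U (2*n+3)) (1:k)) := by
        exact Fin.sum_univ_eq_sum_range
          (fun i => if Even i then Finsupp.single (V (2*n+3)) (1:k)
            else - Finsupp.single (U (2*n+3)) (1:k)) (2*n+2)
    _ = (n+1) • Finsupp.single (V (2*n+3)) (1:k)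
        + (n+1) • (- Finsupp.single (U (2*n+3)) (1:k)) := by
        have h2 : 2*n+2 = 2*(n+1) := by ring
        rw [h2]
        exact sum_alt _ _ (n+1)

lemma B_alpha (n : ℕ) :
    connesB k (2*n+1) (alphaOf k (2*n+2))
      = ((n:k)+1) • (Finsupp.single (U (2*n+3)) (1:k) - Finsupp.single (V (2*n+3)) 1) := by
  have hα : alphaOf k (2*n+2)
      = (2:k)⁻¹ • (Finsupp.single (P (2*n+2)) 1 - Finsupp.single (Q (2*n+2)) 1) := rfl
  rw [hα, map_smul, map_sub, BP, BQ]
  match_scalars <;> push_cast <;> ring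
lemma base_case : hb k 1 (alphaOf k 2) = 0 := by
  have hα : alphaOf k 2 = (2:k)⁻¹ • (Finsupp.single (P 2) 1 - Finsupp.single (Q 2) 1) := rfl
  have hz : ∀ v : Fin 2 → ℤ, v 0 + v 1 = 0 → hb k 1 (Finsupp.single v (1:k)) = 0 := by
    intro v hv
    rw [hb_single]
    have h1 : mergeFun (0 : Fin 1) v = wrapFun v := by
      funext j
      have hj : j = 0 := Subsingleton.elim _ _
      subst hj
      simp only [mergeFun, wrapFun]
      norm_num [Fin.lt_def]
      show v (Fin.castSucc 0) + v (Fin.succ 0) = v (Fin.last 1) + v (Fin.castSucc 0)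
      have : Fin.castSucc (0 : Fin 1) = (0 : Fin 2) := rfl
      have h2 : Fin.succ (0 : Fin 1) = (1 : Fin 2) := rfl
      have h3 : Fin.last 1 = (1 : Fin 2) := rfl
      rw [this, h2, h3]
      ring
    rw [Fin.sum_univ_one, h1]
    simp
  rw [hα, map_smul, map_sub, hz _ (by simp [P]), hz _ (by simp [Q])]
  simp

lemma main_step (n : ℕ) :
    (Nat.factorial (n + 1)) • hb k (2 * n + 3) (alphaOf k (2 * n + 4))
      - (Nat.factorial n) • connesB k (2 * n + 1) (alphaOf k (2 * n + 2))
      ∈ Degenerate k (2 * n + 3) := by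
  have hD := hb_alpha_mem (k := k) n
  have hB := B_alpha (k := k) n
  set S : Ch k (2*n+3) := Finsupp.single (U (2*n+3)) (1:k) - Finsupp.single (V (2*n+3)) 1
    with hS
  set D : Ch k (2*n+3) := hb k (2*n+3) (alphaOf k (2*n+4)) - S with hDdef
  have h1 : hb k (2*n+3) (alphaOf k (2*n+4)) = S + D := by rw [hDdef]; abel
  have key : (Nat.factorial (n + 1)) • hb k (2 * n + 3) (alphaOf k (2 * n + 4))
      - (Nat.factorial n) • connesB k (2 * n + 1) (alphaOf k (2 * n + 2))
      = ((Nat.factorial (n+1) : k)) • D := by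
    rw [hB, h1]
    match_scalars <;> push_cast [Nat.factorial_succ] <;> ring
  rw [key]
  exact Submodule.smul_mem _ _ hD

end HL
/- The element `α = Σ_{j ≥ 0} j! u^j α_{j+1}` is a cycle for the negative cyclic
differential `b - uB` on the normalized Hochschild complex of `k[x,x⁻¹]` (with `u` a
formal variable of cohomological degree `2`): in each `u`-degree, the coefficient of
`(b - uB)(α)` vanishes in the normalized complex.  The `u^0`-coefficient is `b(α₁)`,
and the `u^{n+1}`-coefficient is `(n+1)! · b(α_{n+2}) - n! · B(α_{n+1})`. -/
theorem stmt9 (k : Type*) [Field k] [CharZero k] :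
    hb k 1 (alphaOf k 2) ∈ Degenerate k 1
    ∧ ∀ n : ℕ,
        (Nat.factorial (n + 1)) • hb k (2 * n + 3) (alphaOf k (2 * n + 4))
          - (Nat.factorial n) • connesB k (2 * n + 1) (alphaOf k (2 * n + 2))
          ∈ Degenerate k (2 * n + 3) := by
  constructor
  · rw [HL.base_case]
    exact Submodule.zero_mem _
  · exact fun n => HL.main_step n
end

section
/- Let B be the localization of the A2 double quiver path algebra at a₁ and a₂, and set μ = a₁⁻¹ + a₂. Then b(β₁) = μ⁻¹⊗μ − μ⊗μ⁻¹ modulo the identifications in the normalized Hochschild complex, where β₁ = e*⊗e⊗μ + μ⊗e*⊗e − e*⊗μ⁻¹⊗e − μ⁻¹⊗e⊗e* + 1⊗e*⊗eμ − 1⊗μ⁻¹e⊗e*; more precisely, b(β₁) equals (a₁⊗a₁⁻¹ − a₁⁻¹⊗a₁) + (a₂⁻¹⊗a₂ − a₂⊗a₂⁻¹) in the normalized Hochschild complex of B over R = ke₁⊕ke₂. -/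
/-!
Let `B` be the A2 localized path algebra: it contains orthogonal idempotents `e1, e2`
with `e1 + e2 = 1`, arrows `f` (for `e`) and `g` (for `e*`) with `f = e2 f e1`,
`g = e1 g e2`, and the elements `a1 = e1 + g f`, `a2 = e2 + f g` are invertible in the
respective corner algebras, with inverses `b1`, `b2`.

We present the relative (over `R = k e1 ⊕ k e2`) normalized Hochschild chains by free
`k`-modules on tuples: `FCh m := (Fin m → B) →₀ k` (the basis vector of `v` standing for
the elementary tensor `v 0 ⊗ ⋯ ⊗ v (m-1)`), with the relations of `k`-multilinearity,
`R`-balancedness (including the cyclic one), and normalization (interior slots in `R`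
vanish) imposed through the submodule `Rel`.  Equality in the relative normalized
Hochschild complex is membership of the difference in `Rel`.
-/

namespace MultPreproj

variable (k : Type*) [Field k] [CharZero k] (B : Type*) [Ring B] [Algebra k B]

/-- Free presentation of `m`-slot Hochschild chains. -/
abbrev FCh (m : ℕ) := (Fin m → B) →₀ k

/-- The Hochschild differential `b : C₂ → C₁`,
`b(x₀ ⊗ x₁ ⊗ x₂) = x₀x₁ ⊗ x₂ - x₀ ⊗ x₁x₂ + x₂x₀ ⊗ x₁`. -/
noncomputable def b3 : FCh k B 3 →ₗ[k] FCh k B 2 :=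
  Finsupp.lmapDomain k k (fun v : Fin 3 → B => ![v 0 * v 1, v 2])
    - Finsupp.lmapDomain k k (fun v : Fin 3 → B => ![v 0, v 1 * v 2])
    + Finsupp.lmapDomain k k (fun v : Fin 3 → B => ![v 2 * v 0, v 1])

variable (e1 e2 : B)

/-- Relations defining the relative normalized complex in slot count `2`:
normalization (interior slot in `R = k e1 ⊕ k e2`), `k`-multilinearity in each slot,
and `R`-balancedness across each tensor sign (including the cyclic one). -/
noncomputable def Rel : Submodule k (FCh k B 2) :=
  Submodule.span k
    ({c | ∃ a r : B, r ∈ Submodule.span k ({e1, e2} : Set B)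
        ∧ c = Finsupp.single ![a, r] (1 : k)}
      ∪ {c | ∃ (v : Fin 2 → B) (j : Fin 2) (x y : B),
          c = Finsupp.single (Function.update v j (x + y)) (1 : k)
            - Finsupp.single (Function.update v j x) (1 : k)
            - Finsupp.single (Function.update v j y) (1 : k)}
      ∪ {c | ∃ (v : Fin 2 → B) (j : Fin 2) (t : k) (x : B),
          c = Finsupp.single (Function.update v j (t • x)) (1 : k)
            - t • Finsupp.single (Function.update v j x) (1 : k)}
      ∪ {c | ∃ a d r : B, (r = e1 ∨ r = e2)
          ∧ (c = Finsupp.single ![a * r, d] (1 : k)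
                - Finsupp.single ![a, r * d] (1 : k)
             ∨ c = Finsupp.single ![r * a, d] (1 : k)
                - Finsupp.single ![a, d * r] (1 : k))})


section Helpers
set_option linter.unusedSectionVars false

lemma b3_single (x y z : B) (t : k) :
    b3 k B (Finsupp.single ![x, y, z] t)
      = Finsupp.single ![x * y, z] t - Finsupp.single ![x, y * z] t
        + Finsupp.single ![z * x, y] t := by
  simp [b3, Finsupp.mapDomain_single]

lemma upd0 (u w z : B) : Function.update ![u, w] 0 z = ![z, w] := by
  funext i; fin_cases i <;> simp

lemma upd1 (u w z : B) : Function.update ![u, w] 1 z = ![u, z] := by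
  funext i; fin_cases i <;> simp

lemma memN (a r : B) (hr : r ∈ Submodule.span k ({e1, e2} : Set B)) :
    Finsupp.single ![a, r] (1 : k) ∈ Rel k B e1 e2 :=
  Submodule.subset_span (Or.inl (Or.inl (Or.inl ⟨a, r, hr, rfl⟩)))

lemma memA0 (x y d : B) :
    Finsupp.single ![x + y, d] (1 : k) - Finsupp.single ![x, d] (1 : k)
      - Finsupp.single ![y, d] (1 : k) ∈ Rel k B e1 e2 := by
  refine Submodule.subset_span (Or.inl (Or.inl (Or.inr ⟨![x, d], 0, x, y, ?_⟩)))
  rw [upd0, upd0, upd0]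

lemma memA1 (a x y : B) :
    Finsupp.single ![a, x + y] (1 : k) - Finsupp.single ![a, x] (1 : k)
      - Finsupp.single ![a, y] (1 : k) ∈ Rel k B e1 e2 := by
  refine Submodule.subset_span (Or.inl (Or.inl (Or.inr ⟨![a, x], 1, x, y, ?_⟩)))
  rw [upd1, upd1, upd1]

lemma memS1 (a : B) (t : k) (x : B) :
    Finsupp.single ![a, t • x] (1 : k) - t • Finsupp.single ![a, x] (1 : k)
      ∈ Rel k B e1 e2 := by
  refine Submodule.subset_span (Or.inl (Or.inr ⟨![a, x], 1, t, x, ?_⟩))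
  rw [upd1, upd1]

lemma memZ1 (a : B) : Finsupp.single ![a, (0 : B)] (1 : k) ∈ Rel k B e1 e2 := by
  have h := memS1 k B e1 e2 a 0 0
  simpa using h

lemma memB1 (a d r : B) (h : r = e1 ∨ r = e2) :
    Finsupp.single ![a * r, d] (1 : k) - Finsupp.single ![a, r * d] (1 : k)
      ∈ Rel k B e1 e2 :=
  Submodule.subset_span (Or.inr ⟨a, d, r, h, Or.inl rfl⟩)

lemma memB2 (a d r : B) (h : r = e1 ∨ r = e2) :
    Finsupp.single ![r * a, d] (1 : k) - Finsupp.single ![a, d * r] (1 : k)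
      ∈ Rel k B e1 e2 :=
  Submodule.subset_span (Or.inr ⟨a, d, r, h, Or.inr rfl⟩)

lemma memNeg (a x : B) :
    Finsupp.single ![a, -x] (1 : k) + Finsupp.single ![a, x] (1 : k)
      ∈ Rel k B e1 e2 := by
  have h := memS1 k B e1 e2 a (-1 : k) x
  rw [neg_one_smul, neg_smul, one_smul, sub_neg_eq_add] at h
  exact h

end Helpers

end MultPreproj

open MultPreproj

/- With `μ = a₁⁻¹ + a₂` (so `μ⁻¹ = a₁ + a₂⁻¹`) and
`β₁ = e* ⊗ e ⊗ μ + μ ⊗ e* ⊗ e - e* ⊗ μ⁻¹ ⊗ e - μ⁻¹ ⊗ e ⊗ e*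
      + 1 ⊗ e* ⊗ eμ - 1 ⊗ μ⁻¹e ⊗ e*`,
one has `b(β₁) = (a₁ ⊗ a₁⁻¹ - a₁⁻¹ ⊗ a₁) + (a₂⁻¹ ⊗ a₂ - a₂ ⊗ a₂⁻¹)` in the relative
normalized Hochschild complex of `B` over `R = k e1 ⊕ k e2`. -/
theorem stmt14 (k : Type*) [Field k] [CharZero k]
    {B : Type*} [Ring B] [Algebra k B]
    (e1 e2 f g b1 b2 : B)
    (hsum : e1 + e2 = 1) (h12 : e1 * e2 = 0) (h21 : e2 * e1 = 0)
    (hf : f = e2 * f * e1) (hg : g = e1 * g * e2)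
    (hb1c : b1 = e1 * b1 * e1)
    (hb1 : (e1 + g * f) * b1 = e1) (hb1' : b1 * (e1 + g * f) = e1)
    (hb2c : b2 = e2 * b2 * e2)
    (hb2 : (e2 + f * g) * b2 = e2) (hb2' : b2 * (e2 + f * g) = e2) :
    b3 k B
        (Finsupp.single ![g, f, b1 + (e2 + f * g)] (1 : k)
          + Finsupp.single ![b1 + (e2 + f * g), g, f] (1 : k)
          - Finsupp.single ![g, (e1 + g * f) + b2, f] (1 : k)
          - Finsupp.single ![(e1 + g * f) + b2, f, g] (1 : k)
          + Finsupp.single ![1, g, f * (b1 + (e2 + f * g))] (1 : k)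
          - Finsupp.single ![1, ((e1 + g * f) + b2) * f, g] (1 : k))
      - (Finsupp.single ![(e1 + g * f), b1] (1 : k)
          - Finsupp.single ![b1, (e1 + g * f)] (1 : k)
          + Finsupp.single ![b2, (e2 + f * g)] (1 : k)
          - Finsupp.single ![(e2 + f * g), b2] (1 : k))
      ∈ Rel k B e1 e2 := by
  have he1 : e1 * e1 = e1 := by
    have h := congrArg (fun x => e1 * x) hsum
    simpa [mul_add, h12] using h
  have he2 : e2 * e2 = e2 := by
    have h := congrArg (fun x => e2 * x) hsum
    simpa [mul_add, h21] using h
  have hfe1 : f * e1 = f := by rw [hf, mul_assoc, he1]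
  have he2f : e2 * f = f := by rw [hf, ← mul_assoc, ← mul_assoc, he2]
  have he1f : e1 * f = 0 := by rw [hf, ← mul_assoc, ← mul_assoc, h12, zero_mul, zero_mul]
  have hfe2 : f * e2 = 0 := by rw [hf, mul_assoc, mul_assoc, h12, mul_zero, mul_zero]
  have hge2 : g * e2 = g := by rw [hg, mul_assoc, he2]
  have he1g : e1 * g = g := by rw [hg, ← mul_assoc, ← mul_assoc, he1]
  have he2g : e2 * g = 0 := by rw [hg, ← mul_assoc, ← mul_assoc, h21, zero_mul, zero_mul]
  have hge1 : g * e1 = 0 := by rw [hg, mul_assoc, mul_assoc, h21, mul_zero, mul_zero]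
  have hff : f * f = 0 := by
    calc f * f = (f * e1) * (e2 * f) := by rw [hfe1, he2f]
    _ = f * ((e1 * e2) * f) := by rw [mul_assoc, ← mul_assoc e1]
    _ = 0 := by rw [h12, zero_mul, mul_zero]
  have hgg : g * g = 0 := by
    calc g * g = (g * e2) * (e1 * g) := by rw [hge2, he1g]
    _ = g * ((e2 * e1) * g) := by rw [mul_assoc, ← mul_assoc e2]
    _ = 0 := by rw [h21, zero_mul, mul_zero]
  have he1b1 : e1 * b1 = b1 := by rw [hb1c, ← mul_assoc, ← mul_assoc, he1]
  have hb1e1 : b1 * e1 = b1 := by rw [hb1c, mul_assoc, he1]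
  have he2b2 : e2 * b2 = b2 := by rw [hb2c, ← mul_assoc, ← mul_assoc, he2]
  have hb2e2 : b2 * e2 = b2 := by rw [hb2c, mul_assoc, he2]
  have hinter : g * (e2 + f * g) = (e1 + g * f) * g := by
    rw [mul_add, add_mul, hge2, he1g, mul_assoc]
  have hb1g : b1 * g = g * b2 := by
    have h := congrArg (fun x => b1 * (x * b2)) hinter
    simp only [mul_assoc] at h
    rw [hb2, hge2, ← mul_assoc b1, hb1', ← mul_assoc e1, he1g] at h
    exact h
  have hinter' : f * (e1 + g * f) = (e2 + f * g) * f := by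
    rw [mul_add, add_mul, hfe1, he2f, mul_assoc]
  have hb2f : b2 * f = f * b1 := by
    have h := congrArg (fun x => b2 * (x * b1)) hinter'
    simp only [mul_assoc] at h
    rw [hb1, hfe1, ← mul_assoc b2, hb2', ← mul_assoc e2, he2f] at h
    exact h
  have hfmu : f * (b1 + (e2 + f * g)) = f * b1 := by
    simp [mul_add, hfe2, ← mul_assoc, hff]
  have hmug : (b1 + (e2 + f * g)) * g = b1 * g := by
    simp [add_mul, he2g, mul_assoc, hgg]
  have hgnu : g * ((e1 + g * f) + b2) = b1 * g := by
    simp [mul_add, hge1, ← mul_assoc, hgg, hb1g]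
  have hnuf : ((e1 + g * f) + b2) * f = f * b1 := by
    simp [add_mul, he1f, mul_assoc, hff, hb2f]
  have hgfb1 : g * f * b1 = e1 - b1 := by
    have h := hb1
    rw [add_mul, he1b1] at h
    exact eq_sub_of_add_eq' h
  have hfgb2 : f * g * b2 = e2 - b2 := by
    have h := hb2
    rw [add_mul, he2b2] at h
    exact eq_sub_of_add_eq' h
  have hgfb1' : g * (f * b1) = e1 - b1 := by rw [← mul_assoc, hgfb1]
  have hfb1g : f * b1 * g = e2 - b2 := by rw [mul_assoc, hb1g, ← mul_assoc, hfgb2]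
  have e1span : e1 ∈ Submodule.span k ({e1, e2} : Set B) := Submodule.subset_span (by simp)
  have e2span : e2 ∈ Submodule.span k ({e1, e2} : Set B) := Submodule.subset_span (by simp)
  have m1 : Finsupp.single ![g * f, b1 + (e2 + f * g)] (1 : k) - Finsupp.single ![g * f, b1] (1 : k) - Finsupp.single ![g * f, e2 + f * g] (1 : k) ∈ Rel k B e1 e2 :=
    memA1 k B e1 e2 (g * f) b1 (e2 + f * g)
  have m2 : Finsupp.single ![g * f, e2 + f * g] (1 : k) - Finsupp.single ![g * f, (0 : B)] (1 : k) ∈ Rel k B e1 e2 := by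
    have h := memB1 k B e1 e2 (g * f) (e2 + f * g) e1 (Or.inl rfl)
    rwa [show g * f * e1 = g * f from by rw [mul_assoc, hfe1],
      show e1 * (e2 + f * g) = 0 from by rw [mul_add, h12, ← mul_assoc, he1f, zero_mul, add_zero]] at h
  have m3 : Finsupp.single ![g * f, (0 : B)] (1 : k) ∈ Rel k B e1 e2 :=
    memZ1 k B e1 e2 (g * f)
  have m4 : Finsupp.single ![e1 + g * f, b1] (1 : k) - Finsupp.single ![e1, b1] (1 : k) - Finsupp.single ![g * f, b1] (1 : k) ∈ Rel k B e1 e2 :=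
    memA0 k B e1 e2 e1 (g * f) b1
  have m5 : Finsupp.single ![e1, b1] (1 : k) - Finsupp.single ![1, b1] (1 : k) ∈ Rel k B e1 e2 := by
    have h := memB1 k B e1 e2 1 b1 e1 (Or.inl rfl)
    rwa [one_mul, he1b1] at h
  have m6 : Finsupp.single ![b1 + (e2 + f * g), g * f] (1 : k) - Finsupp.single ![b1, g * f] (1 : k) - Finsupp.single ![e2 + f * g, g * f] (1 : k) ∈ Rel k B e1 e2 :=
    memA0 k B e1 e2 b1 (e2 + f * g) (g * f)
  have m7 : Finsupp.single ![e2 + f * g, g * f] (1 : k) - Finsupp.single ![e2 + f * g, (0 : B)] (1 : k) ∈ Rel k B e1 e2 := by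
    have h := memB1 k B e1 e2 (e2 + f * g) (g * f) e2 (Or.inr rfl)
    rwa [show (e2 + f * g) * e2 = e2 + f * g from by rw [add_mul, he2, mul_assoc, hge2],
      show e2 * (g * f) = 0 from by rw [← mul_assoc, he2g, zero_mul]] at h
  have m8 : Finsupp.single ![e2 + f * g, (0 : B)] (1 : k) ∈ Rel k B e1 e2 :=
    memZ1 k B e1 e2 (e2 + f * g)
  have m9 : Finsupp.single ![b1, e1 + g * f] (1 : k) - Finsupp.single ![b1, e1] (1 : k) - Finsupp.single ![b1, g * f] (1 : k) ∈ Rel k B e1 e2 :=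
    memA1 k B e1 e2 b1 e1 (g * f)
  have m10 : Finsupp.single ![b1, e1] (1 : k) ∈ Rel k B e1 e2 :=
    memN k B e1 e2 b1 e1 e1span
  have m11 : Finsupp.single ![f * g, e1 + g * f + b2] (1 : k) - Finsupp.single ![f * g, e1 + g * f] (1 : k) - Finsupp.single ![f * g, b2] (1 : k) ∈ Rel k B e1 e2 :=
    memA1 k B e1 e2 (f * g) (e1 + g * f) b2
  have m12 : Finsupp.single ![f * g, e1 + g * f] (1 : k) - Finsupp.single ![f * g, (0 : B)] (1 : k) ∈ Rel k B e1 e2 := by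
    have h := memB1 k B e1 e2 (f * g) (e1 + g * f) e2 (Or.inr rfl)
    rwa [show f * g * e2 = f * g from by rw [mul_assoc, hge2],
      show e2 * (e1 + g * f) = 0 from by rw [mul_add, h21, ← mul_assoc, he2g, zero_mul, add_zero]] at h
  have m13 : Finsupp.single ![f * g, (0 : B)] (1 : k) ∈ Rel k B e1 e2 :=
    memZ1 k B e1 e2 (f * g)
  have m14 : Finsupp.single ![e2 + f * g, b2] (1 : k) - Finsupp.single ![e2, b2] (1 : k) - Finsupp.single ![f * g, b2] (1 : k) ∈ Rel k B e1 e2 :=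
    memA0 k B e1 e2 e2 (f * g) b2
  have m15 : Finsupp.single ![e2, b2] (1 : k) - Finsupp.single ![1, b2] (1 : k) ∈ Rel k B e1 e2 := by
    have h := memB1 k B e1 e2 1 b2 e2 (Or.inr rfl)
    rwa [one_mul, he2b2] at h
  have m16 : Finsupp.single ![e1 + g * f + b2, f * g] (1 : k) - Finsupp.single ![e1 + g * f, f * g] (1 : k) - Finsupp.single ![b2, f * g] (1 : k) ∈ Rel k B e1 e2 :=
    memA0 k B e1 e2 (e1 + g * f) b2 (f * g)
  have m17 : Finsupp.single ![e1 + g * f, f * g] (1 : k) - Finsupp.single ![e1 + g * f, (0 : B)] (1 : k) ∈ Rel k B e1 e2 := by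
    have h := memB1 k B e1 e2 (e1 + g * f) (f * g) e1 (Or.inl rfl)
    rwa [show (e1 + g * f) * e1 = e1 + g * f from by rw [add_mul, he1, mul_assoc, hfe1],
      show e1 * (f * g) = 0 from by rw [← mul_assoc, he1f, zero_mul]] at h
  have m18 : Finsupp.single ![e1 + g * f, (0 : B)] (1 : k) ∈ Rel k B e1 e2 :=
    memZ1 k B e1 e2 (e1 + g * f)
  have m19 : Finsupp.single ![b2, e2 + f * g] (1 : k) - Finsupp.single ![b2, e2] (1 : k) - Finsupp.single ![b2, f * g] (1 : k) ∈ Rel k B e1 e2 :=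
    memA1 k B e1 e2 b2 e2 (f * g)
  have m20 : Finsupp.single ![b2, e2] (1 : k) ∈ Rel k B e1 e2 :=
    memN k B e1 e2 b2 e2 e2span
  have m21 : Finsupp.single ![1, e1 - b1] (1 : k) - Finsupp.single ![1, e1] (1 : k) - Finsupp.single ![1, -b1] (1 : k) ∈ Rel k B e1 e2 := by
    have h := memA1 k B e1 e2 1 e1 (-b1)
    rwa [← sub_eq_add_neg] at h
  have m22 : Finsupp.single ![1, -b1] (1 : k) + Finsupp.single ![1, b1] (1 : k) ∈ Rel k B e1 e2 :=
    memNeg k B e1 e2 1 b1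
  have m23 : Finsupp.single ![1, e1] (1 : k) ∈ Rel k B e1 e2 :=
    memN k B e1 e2 1 e1 e1span
  have m24 : Finsupp.single ![1, e2 - b2] (1 : k) - Finsupp.single ![1, e2] (1 : k) - Finsupp.single ![1, -b2] (1 : k) ∈ Rel k B e1 e2 := by
    have h := memA1 k B e1 e2 1 e2 (-b2)
    rwa [← sub_eq_add_neg] at h
  have m25 : Finsupp.single ![1, -b2] (1 : k) + Finsupp.single ![1, b2] (1 : k) ∈ Rel k B e1 e2 :=
    memNeg k B e1 e2 1 b2
  have m26 : Finsupp.single ![1, e2] (1 : k) ∈ Rel k B e1 e2 :=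
    memN k B e1 e2 1 e2 e2span
  have key : (b3 k B
        (Finsupp.single ![g, f, b1 + (e2 + f * g)] (1 : k)
          + Finsupp.single ![b1 + (e2 + f * g), g, f] (1 : k)
          - Finsupp.single ![g, (e1 + g * f) + b2, f] (1 : k)
          - Finsupp.single ![(e1 + g * f) + b2, f, g] (1 : k)
          + Finsupp.single ![1, g, f * (b1 + (e2 + f * g))] (1 : k)
          - Finsupp.single ![1, ((e1 + g * f) + b2) * f, g] (1 : k))
      - (Finsupp.single ![(e1 + g * f), b1] (1 : k)
          - Finsupp.single ![b1, (e1 + g * f)] (1 : k)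
          + Finsupp.single ![b2, (e2 + f * g)] (1 : k)
          - Finsupp.single ![(e2 + f * g), b2] (1 : k)))
      = (Finsupp.single ![g * f, b1 + (e2 + f * g)] (1 : k) - Finsupp.single ![g * f, b1] (1 : k) - Finsupp.single ![g * f, e2 + f * g] (1 : k))
      + (Finsupp.single ![g * f, e2 + f * g] (1 : k) - Finsupp.single ![g * f, (0 : B)] (1 : k))
      + (Finsupp.single ![g * f, (0 : B)] (1 : k))
      - (Finsupp.single ![e1 + g * f, b1] (1 : k) - Finsupp.single ![e1, b1] (1 : k) - Finsupp.single ![g * f, b1] (1 : k))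
      - (Finsupp.single ![e1, b1] (1 : k) - Finsupp.single ![1, b1] (1 : k))
      - (Finsupp.single ![b1 + (e2 + f * g), g * f] (1 : k) - Finsupp.single ![b1, g * f] (1 : k) - Finsupp.single ![e2 + f * g, g * f] (1 : k))
      - (Finsupp.single ![e2 + f * g, g * f] (1 : k) - Finsupp.single ![e2 + f * g, (0 : B)] (1 : k))
      - (Finsupp.single ![e2 + f * g, (0 : B)] (1 : k))
      + (Finsupp.single ![b1, e1 + g * f] (1 : k) - Finsupp.single ![b1, e1] (1 : k) - Finsupp.single ![b1, g * f] (1 : k))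
      + (Finsupp.single ![b1, e1] (1 : k))
      - (Finsupp.single ![f * g, e1 + g * f + b2] (1 : k) - Finsupp.single ![f * g, e1 + g * f] (1 : k) - Finsupp.single ![f * g, b2] (1 : k))
      - (Finsupp.single ![f * g, e1 + g * f] (1 : k) - Finsupp.single ![f * g, (0 : B)] (1 : k))
      - (Finsupp.single ![f * g, (0 : B)] (1 : k))
      + (Finsupp.single ![e2 + f * g, b2] (1 : k) - Finsupp.single ![e2, b2] (1 : k) - Finsupp.single ![f * g, b2] (1 : k))
      + (Finsupp.single ![e2, b2] (1 : k) - Finsupp.single ![1, b2] (1 : k))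
      + (Finsupp.single ![e1 + g * f + b2, f * g] (1 : k) - Finsupp.single ![e1 + g * f, f * g] (1 : k) - Finsupp.single ![b2, f * g] (1 : k))
      + (Finsupp.single ![e1 + g * f, f * g] (1 : k) - Finsupp.single ![e1 + g * f, (0 : B)] (1 : k))
      + (Finsupp.single ![e1 + g * f, (0 : B)] (1 : k))
      - (Finsupp.single ![b2, e2 + f * g] (1 : k) - Finsupp.single ![b2, e2] (1 : k) - Finsupp.single ![b2, f * g] (1 : k))
      - (Finsupp.single ![b2, e2] (1 : k))
      - (Finsupp.single ![1, e1 - b1] (1 : k) - Finsupp.single ![1, e1] (1 : k) - Finsupp.single ![1, -b1] (1 : k))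
      - (Finsupp.single ![1, -b1] (1 : k) + Finsupp.single ![1, b1] (1 : k))
      - (Finsupp.single ![1, e1] (1 : k))
      + (Finsupp.single ![1, e2 - b2] (1 : k) - Finsupp.single ![1, e2] (1 : k) - Finsupp.single ![1, -b2] (1 : k))
      + (Finsupp.single ![1, -b2] (1 : k) + Finsupp.single ![1, b2] (1 : k))
      + (Finsupp.single ![1, e2] (1 : k)) := by
    simp only [map_add, map_sub, b3_single, one_mul, mul_one]
    rw [hfmu, hmug, hgnu, hnuf, hgfb1', hfb1g]
    abel
  rw [key]
  exact (add_mem (add_mem (add_mem (sub_mem (sub_mem (sub_mem (sub_mem (sub_mem (add_mem (add_mem (add_mem (add_mem (add_mem (sub_mem (sub_mem (sub_mem (add_mem (add_mem (sub_mem (sub_mem (sub_mem (sub_mem (sub_mem (add_mem (add_mem m1 m2) m3) m4) m5) m6) m7) m8) m9) m10) m11) m12) m13) m14) m15) m16) m17) m18) m19) m20) m21) m22) m23) m24) m25) m26)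
end
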